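/- Let {y₀, …, yₙ} ⊂ ℝⁿ be a ρ-robust collection (for each 0 ≤ k < n, the distance from y_{k+1} to the affine subspace spanned by {y₀, …, yₖ} is at least ρ). Then the parallelepiped P with edges yᵢ − y₀, 1 ≤ i ≤ n, has n-dimensional volume at least ρ^(n−1) · ‖y₁ − y₀‖. -/

import Mathlib

open Finset Submodule MeasureTheory FiniteDimensional InnerProductSpace

section Aux

variable {E : Type*} [NormedAddCommGroup E] [InnerProductSpace ℝ E]
variable {ι : Type*} [LinearOrder ι] [LocallyFiniteOrderBot ι] [WellFoundedLT ι]

lemma aux_inner_gramSchmidt_self (f : ι → E) (i : ι) :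
    (inner ℝ (gramSchmidt ℝ f i) (f i) : ℝ) = ‖gramSchmidt ℝ f i‖ ^ 2 := by
  conv_lhs => rw [gramSchmidt_def' ℝ f i]
  rw [inner_add_right, real_inner_self_eq_norm_sq, inner_sum]
  rw [Finset.sum_eq_zero, add_zero]
  intro j hj
  rw [starProjection_singleton, inner_smul_right,
    gramSchmidt_orthogonal ℝ f (Finset.mem_Iio.mp hj).ne', mul_zero]

end Aux

/-- If `{y₀, …, yₙ} ⊂ ℝⁿ` is a `ρ`-robust collection (for each `0 ≤ k < n`, the distance
from `y_{k+1}` to the affine subspace spanned by `{y₀, …, yₖ}` is at least `ρ`), then the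
parallelepiped with edges `yᵢ − y₀`, `1 ≤ i ≤ n`, has `n`-dimensional volume at least
`ρ^(n−1) · ‖y₁ − y₀‖`. -/
theorem stmt_6 (n : ℕ) (y : Fin (n + 1) → EuclideanSpace ℝ (Fin n)) (ρ : ℝ) (hρ : 0 < ρ)
    (hrobust : ∀ k : Fin n, ρ ≤ Metric.infDist (y k.succ)
      (affineSpan ℝ (y '' {i | i ≤ k.castSucc}) : Set (EuclideanSpace ℝ (Fin n)))) :
    ENNReal.ofReal (ρ ^ (n - 1) * ‖y 1 - y 0‖) ≤
      MeasureTheory.volume (parallelepiped fun i : Fin n => y i.succ - y 0) := by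
  rcases n with _ | m
  · have h1 : (1 : Fin 1) = 0 := Subsingleton.elim _ _
    simp [h1]
  haveI : WellFoundedLT (Fin (m+1)) := Finite.to_wellFoundedLT
  set v : Fin (m + 1) → EuclideanSpace ℝ (Fin (m + 1)) := fun i => y i.succ - y 0 with hv
  set g : Fin (m + 1) → EuclideanSpace ℝ (Fin (m + 1)) := gramSchmidt ℝ v with hg
  -- key estimate: each Gram-Schmidt vector has norm at least ρ
  have key : ∀ k : Fin (m + 1), ρ ≤ ‖g k‖ := by
    intro k
    set A := affineSpan ℝ (y '' {i | i ≤ k.castSucc}) with hA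
    have hy0 : y 0 ∈ A := subset_affineSpan ℝ _ ⟨0, Fin.zero_le _, rfl⟩
    have hdir : ∀ j : Fin (m + 1), j < k → v j ∈ A.direction := by
      intro j hj
      have hjk : j.succ ≤ k.castSucc := by
        simp only [Fin.le_def, Fin.lt_def] at *
        simp [Fin.val_succ]
        omega
      have h1 : y j.succ ∈ A := subset_affineSpan ℝ _ ⟨j.succ, hjk, rfl⟩
      have := AffineSubspace.vsub_mem_direction h1 hy0
      simpa [hv, vsub_eq_sub] using this
    set w : EuclideanSpace ℝ (Fin (m + 1)) := ∑ i ∈ Finset.Iio k, (orthogonalProjection (ℝ ∙ g i) (v k) : EuclideanSpace ℝ (Fin (m + 1))) with hw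
    have hgk : g k = v k - w := gramSchmidt_def ℝ v k
    have hwdir : w ∈ A.direction := by
      apply Submodule.sum_mem
      intro i hi
      have hgi : g i ∈ A.direction := by
        have h2 := gramSchmidt_mem_span ℝ v (le_refl i)
        refine Submodule.span_le.mpr ?_ h2
        rintro x ⟨j, hj, rfl⟩
        exact hdir j (lt_of_le_of_lt hj (Finset.mem_Iio.mp hi))
      have h3 : (orthogonalProjection (ℝ ∙ g i) (v k) : EuclideanSpace ℝ (Fin (m + 1))) ∈ (ℝ ∙ g i) :=
        SetLike.coe_mem _
      exact (Submodule.span_singleton_le_iff_mem _ _).mpr hgi h3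
    have hmem : w +ᵥ y 0 ∈ A := AffineSubspace.vadd_mem_of_mem_direction hwdir hy0
    calc ρ ≤ Metric.infDist (y k.succ) (A : Set (EuclideanSpace ℝ (Fin (m + 1)))) := hrobust k
      _ ≤ dist (y k.succ) (w +ᵥ y 0) := Metric.infDist_le_dist_of_mem hmem
      _ = ‖g k‖ := by
          rw [dist_eq_norm, hgk]
          congr 1
          simp only [hv, vadd_eq_add]
          abel
  have hgne : ∀ k, g k ≠ 0 := by
    intro k h
    have h' := key k
    rw [h, norm_zero] at h'
    exact absurd h' (not_le.mpr hρ)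
  have hcard : Module.finrank ℝ (EuclideanSpace ℝ (Fin (m + 1))) = Fintype.card (Fin (m + 1)) := by
    simp
  set b := gramSchmidtOrthonormalBasis hcard v with hb
  have hbap : ∀ i, b i = gramSchmidtNormed ℝ v i := by
    intro i
    apply gramSchmidtOrthonormalBasis_apply
    simp only [gramSchmidtNormed]
    exact smul_ne_zero (by exact_mod_cast inv_ne_zero (norm_ne_zero_iff.mpr (hgne i))) (hgne i)
  have hinner : ∀ i, (inner ℝ (b i) (v i) : ℝ) = ‖g i‖ := by
    intro i
    rw [hbap, gramSchmidtNormed, real_inner_smul_left, aux_inner_gramSchmidt_self]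
    have h4 : ‖g i‖ ≠ 0 := norm_ne_zero_iff.mpr (hgne i)
    field_simp
    rw [← hg, RCLike.ofReal_real_eq_id, id]
    field_simp
  haveI : Fact (Module.finrank ℝ (EuclideanSpace ℝ (Fin (m + 1))) = m + 1) := ⟨by simp⟩
  set o := b.toBasis.orientation with ho
  rw [← o.measure_eq_volume, AlternatingMap.measure_parallelepiped]
  apply ENNReal.ofReal_le_ofReal
  have h5 : |o.volumeForm v| = |b.toBasis.det v| := o.volumeForm_robust' b v
  have h6 : b.toBasis.det v = ∏ i, ‖g i‖ := by
    rw [gramSchmidtOrthonormalBasis_det]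
    exact Finset.prod_congr rfl fun i _ => hinner i
  rw [h5, h6, abs_of_nonneg (Finset.prod_nonneg fun i _ => norm_nonneg _)]
  have h7 : ∏ i, ‖g i‖ = ‖g 0‖ * ∏ i ∈ Finset.univ.erase 0, ‖g i‖ :=
    (Finset.mul_prod_erase _ _ (Finset.mem_univ 0)).symm
  have h8 : ρ ^ m ≤ ∏ i ∈ Finset.univ.erase 0, ‖g i‖ := by
    calc ρ ^ m = ∏ _i ∈ Finset.univ.erase (0 : Fin (m + 1)), ρ := by
          rw [Finset.prod_const, Finset.card_erase_of_mem (Finset.mem_univ _),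
            Finset.card_univ, Fintype.card_fin]
          rfl
      _ ≤ _ := Finset.prod_le_prod (fun i _ => hρ.le) (fun i _ => key i)
  have h9 : ‖g 0‖ = ‖y 1 - y 0‖ := by
    have hIio : Finset.Iio (0 : Fin (m + 1)) = ∅ := by
      ext j
      simp
    have : g 0 = v 0 := by
      rw [hg, gramSchmidt_def, hIio, Finset.sum_empty, sub_zero]
    rw [this]
    simp [hv, Fin.succ_zero_eq_one]
  rw [h7, h9]
  have h10 : (m + 1 : ℕ) - 1 = m := rfl
  rw [h10, mul_comm (ρ ^ m)]
  exact mul_le_mul_of_nonneg_left h8 (norm_nonneg _)
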